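/- Let 0<λ<1, d≥2, let A:ℝ→ℝ be Lipschitz and 1-periodic, let b be the λ-calibrated subaction for A, and define the rate function R(z)=b(T(z))−λb(z)−A(z)≥0 and p(x,w)=b(x)−S(x,w)≥0. Then: (a) for every x∈[0,1] and w∈Σ, R(τ_{w₀}(x)) = p(x,w) − λ·p(τ_{w₀}(x), σ(w)), i.e. p − λ·(p∘𝕋^{-1}) = R∘(first coordinate of 𝕋^{-1}) ≥ 0; (b) hence the set Γ={(x,w) : p(x,w)=0} is invariant under 𝕋^{-1}: p(x,w)=0 implies p(τ_{w₀}(x),σ(w))=0; (c) iterating, if a=(i₀,i₁,…) is optimal for x (b(x)=S(x,a)), then σⁿ(a) is optimal for (τ_{i_{n−1}}∘⋯∘τ_{i₁}∘τ_{i₀})(x) for every n≥1. -/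

import Mathlib

open Set

noncomputable section

/-- Inverse branch `τ_i(x) = (x+i)/d` of `T(x) = dx (mod 1)`. -/
def tau (d i : ℕ) (x : ℝ) : ℝ := (x + i) / d

/-- Iterated inverse branches: `tpath d a x k = (τ_{a_k} ∘ ⋯ ∘ τ_{a_0})(x)`. -/
def tpath (d : ℕ) (a : ℕ → ℕ) (x : ℝ) : ℕ → ℝ
  | 0 => tau d (a 0) x
  | k + 1 => tau d (a (k + 1)) (tpath d a x k)

/-- `S(x,a) = Σ_{k≥0} λ^k A(τ_{k,a} x)`. -/
def Sfun (lam : ℝ) (d : ℕ) (A : ℝ → ℝ) (x : ℝ) (a : ℕ → ℕ) : ℝ :=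
  ∑' k : ℕ, lam ^ k * A (tpath d a x k)

/-- The left shift `σ` on sequences. -/
def shift (a : ℕ → ℕ) : ℕ → ℕ := fun n => a (n + 1)

/-- Strict lexicographic order on sequences. -/
def lexLt (a b : ℕ → ℕ) : Prop := ∃ n, (∀ i < n, a i = b i) ∧ a n < b n

/-- `T(x) = dx (mod 1)`. -/
def Tmap (d : ℕ) (x : ℝ) : ℝ := Int.fract (d * x)

/-- A λ-calibrated subaction for `A`: continuous on `[0,1]`, `b 0 = b 1`, and
`b(x) = max_{i<d} (λ b(τ_i x) + A(τ_i x))` for all `x ∈ [0,1]`. -/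
def IsCalibrated (lam : ℝ) (d : ℕ) (A b : ℝ → ℝ) : Prop :=
  ContinuousOn b (Icc 0 1) ∧ b 0 = b 1 ∧
    ∀ x ∈ Icc (0:ℝ) 1,
      IsGreatest {y : ℝ | ∃ i < d, y = lam * b (tau d i x) + A (tau d i x)} (b x)

/-- The twist condition: for `a < b` lexicographically and `x ∈ (0,1)`,
`∂S/∂x(x,a) − ∂S/∂x(x,b) > 0`. -/
def Twist (lam : ℝ) (d : ℕ) (A : ℝ → ℝ) : Prop :=
  ∀ a b : ℕ → ℕ, (∀ k, a k < d) → (∀ k, b k < d) → lexLt a b →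
    ∀ x ∈ Ioo (0:ℝ) 1,
      0 < deriv (fun y => Sfun lam d A y a) x - deriv (fun y => Sfun lam d A y b) x

/-- `Z(a) = Σ_k (λ/2)^k a_k`. -/
def Zfun (lam : ℝ) (a : ℕ → ℕ) : ℝ := ∑' k : ℕ, (lam / 2) ^ k * a k

/-- `ψ_k(a) = Σ_{j=0}^{k} a_j 2^{j−k−1}`. -/
def psi (a : ℕ → ℕ) (k : ℕ) : ℝ :=
  ∑ j ∈ Finset.range (k + 1), (a j : ℝ) * (2 : ℝ) ^ ((j : ℤ) - k - 1)

/-- Concatenation `i * c`. -/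
def cons (i : ℕ) (c : ℕ → ℕ) : ℕ → ℕ
  | 0 => i
  | n + 1 => c n

/-- The periodic sequence `(10)^∞ = (1,0,1,0,…)`. -/
def seq10 : ℕ → ℕ := fun n => if n % 2 = 0 then 1 else 0

/-- The periodic sequence `(01)^∞ = (0,1,0,1,…)`. -/
def seq01 : ℕ → ℕ := fun n => n % 2

/-- The periodic sequence `(110)^∞`. -/
def seq110 : ℕ → ℕ := fun n => if n % 3 = 2 then 0 else 1

/-- The periodic sequence `(101)^∞`. -/
def seq101 : ℕ → ℕ := fun n => if n % 3 = 1 then 0 else 1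

/-- The periodic sequence `(011)^∞`. -/
def seq011 : ℕ → ℕ := fun n => if n % 3 = 0 then 0 else 1


lemma tau_mem {d : ℕ} (hd : 2 ≤ d) {i : ℕ} (hi : i < d) {x : ℝ} (hx : x ∈ Icc (0:ℝ) 1) :
    tau d i x ∈ Icc (0:ℝ) 1 := by
  have hd0 : (0:ℝ) < d := by
    have : 0 < d := lt_of_lt_of_le (by norm_num) hd
    exact_mod_cast this
  have hi' : (i:ℝ) + 1 ≤ d := by exact_mod_cast hi
  constructor
  · apply div_nonneg _ hd0.le
    have := hx.1
    positivity
  · rw [tau, div_le_one hd0]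
    linarith [hx.2]

lemma tpath_mem {d : ℕ} (hd : 2 ≤ d) {w : ℕ → ℕ} (hw : ∀ k, w k < d)
    {x : ℝ} (hx : x ∈ Icc (0:ℝ) 1) : ∀ n, tpath d w x n ∈ Icc (0:ℝ) 1 := by
  intro n
  induction n with
  | zero => exact tau_mem hd (hw 0) hx
  | succ k ih => exact tau_mem hd (hw (k+1)) ih

lemma tpath_shift (d : ℕ) (w : ℕ → ℕ) (x : ℝ) :
    ∀ k, tpath d w x (k + 1) = tpath d (shift w) (tau d (w 0) x) k := by
  intro k
  induction k with
  | zero => rfl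
  | succ m ih => show tau d (w (m+2)) (tpath d w x (m+1)) = _; rw [ih]; rfl

lemma summable_aux {lam : ℝ} (hlam0 : 0 < lam) (hlam1 : lam < 1) {d : ℕ} (hd : 2 ≤ d)
    {A : ℝ → ℝ} (hA : Continuous A) {w : ℕ → ℕ} (hw : ∀ k, w k < d)
    {x : ℝ} (hx : x ∈ Icc (0:ℝ) 1) :
    Summable (fun k : ℕ => lam ^ k * A (tpath d w x k)) := by
  obtain ⟨C, hC⟩ := isCompact_Icc.exists_bound_of_continuousOn (hA.continuousOn (s := Icc (0:ℝ) 1))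
  apply Summable.of_norm_bounded
    ((summable_geometric_of_lt_one hlam0.le hlam1).mul_left C)
  intro k
  rw [norm_mul, Real.norm_eq_abs, Real.norm_eq_abs, abs_pow, abs_of_pos hlam0, mul_comm]
  exact mul_le_mul_of_nonneg_right (hC _ (tpath_mem hd hw hx k)) (pow_nonneg hlam0.le k)

lemma Sfun_rec {lam : ℝ} (hlam0 : 0 < lam) (hlam1 : lam < 1) {d : ℕ} (hd : 2 ≤ d)
    {A : ℝ → ℝ} (hA : Continuous A) {w : ℕ → ℕ} (hw : ∀ k, w k < d)
    {x : ℝ} (hx : x ∈ Icc (0:ℝ) 1) :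
    Sfun lam d A x w = A (tau d (w 0) x) + lam * Sfun lam d A (tau d (w 0) x) (shift w) := by
  have hs := summable_aux hlam0 hlam1 hd hA hw hx
  have h0 : Sfun lam d A x w = lam ^ 0 * A (tpath d w x 0)
      + ∑' k : ℕ, lam ^ (k+1) * A (tpath d w x (k+1)) := hs.tsum_eq_zero_add
  rw [h0]
  have : ∀ k : ℕ, lam ^ (k+1) * A (tpath d w x (k+1))
      = lam * (lam ^ k * A (tpath d (shift w) (tau d (w 0) x) k)) := by
    intro k; rw [tpath_shift]; ring
  simp only [this, pow_zero, one_mul]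
  rw [tsum_mul_left]
  rfl

lemma calib_ge {lam : ℝ} {d : ℕ} {A b : ℝ → ℝ} (hb : IsCalibrated lam d A b)
    {x : ℝ} (hx : x ∈ Icc (0:ℝ) 1) {i : ℕ} (hi : i < d) :
    lam * b (tau d i x) + A (tau d i x) ≤ b x :=
  (hb.2.2 x hx).2 ⟨i, hi, rfl⟩

lemma Tmap_tau {d : ℕ} (hd : 2 ≤ d) (i : ℕ) (x : ℝ) :
    Tmap d (tau d i x) = Int.fract x := by
  have hd0 : (d:ℝ) ≠ 0 := by
    have : 0 < d := lt_of_lt_of_le (by norm_num) hd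
    positivity
  rw [Tmap, tau, mul_div_cancel₀ _ hd0, Int.fract_add_natCast]

lemma b_Tmap_tau {lam : ℝ} {d : ℕ} (hd : 2 ≤ d) {A b : ℝ → ℝ} (hb : IsCalibrated lam d A b)
    (i : ℕ) {x : ℝ} (hx : x ∈ Icc (0:ℝ) 1) : b (Tmap d (tau d i x)) = b x := by
  rw [Tmap_tau hd]
  rcases eq_or_lt_of_le hx.2 with h1 | h1
  · rw [h1, Int.fract_one]; exact h1 ▸ hb.2.1
  · rw [Int.fract_eq_self.mpr ⟨hx.1, h1⟩]

/-- the fundamental relation. With `R(z) = b(T z) − λ b(z) − A(z) ≥ 0` and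
`p(x,w) = b(x) − S(x,w) ≥ 0`: (a) `R(τ_{w₀}x) = p(x,w) − λ p(τ_{w₀}x, σw)`;
(b) `Γ = {p = 0}` is `𝕋⁻¹`-invariant; (c) if `a` is optimal for `x` then `σⁿ(a)` is
optimal for `τ_{a_{n−1}} ∘ ⋯ ∘ τ_{a₀}(x)` for every `n ≥ 1`. -/
theorem stmt19 (lam : ℝ) (hlam0 : 0 < lam) (hlam1 : lam < 1) (d : ℕ) (hd : 2 ≤ d)
    (A : ℝ → ℝ) (K : NNReal) (hLip : LipschitzWith K A) (hper : Function.Periodic A 1)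
    (b : ℝ → ℝ) (hb : IsCalibrated lam d A b)
    (R : ℝ → ℝ) (hR : ∀ z, R z = b (Tmap d z) - lam * b z - A z)
    (p : ℝ → (ℕ → ℕ) → ℝ) (hp : ∀ x w, p x w = b x - Sfun lam d A x w) :
    (∀ z ∈ Icc (0:ℝ) 1, 0 ≤ R z) ∧
    (∀ x ∈ Icc (0:ℝ) 1, ∀ w : ℕ → ℕ, (∀ k, w k < d) → 0 ≤ p x w) ∧
    (∀ x ∈ Icc (0:ℝ) 1, ∀ w : ℕ → ℕ, (∀ k, w k < d) →
      R (tau d (w 0) x) = p x w - lam * p (tau d (w 0) x) (shift w)) ∧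
    (∀ x ∈ Icc (0:ℝ) 1, ∀ w : ℕ → ℕ, (∀ k, w k < d) →
      p x w = 0 → p (tau d (w 0) x) (shift w) = 0) ∧
    (∀ x ∈ Icc (0:ℝ) 1, ∀ a : ℕ → ℕ, (∀ k, a k < d) → b x = Sfun lam d A x a →
      ∀ n : ℕ, b (tpath d a x n) = Sfun lam d A (tpath d a x n) (fun m => a (m + n + 1))) := by
  have hA : Continuous A := hLip.continuous
  have hd0 : (0:ℝ) < d := by
    have : 0 < d := lt_of_lt_of_le (by norm_num) hd
    exact_mod_cast this
  -- R ≥ 0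
  have hRge : ∀ z ∈ Icc (0:ℝ) 1, 0 ≤ R z := by
    intro z hz
    rcases eq_or_lt_of_le hz.2 with h1 | h1
    · -- z = 1
      have hT : Tmap d z = 0 := by
        rw [h1, Tmap, mul_one, Int.fract_natCast]
      have h00 : tau d 0 (0:ℝ) = 0 := by simp [tau]
      have hcal := calib_ge hb (x := (0:ℝ)) (by norm_num)
        (i := 0) (lt_of_lt_of_le (by norm_num) hd)
      rw [h00] at hcal
      have hA1 : A z = A 0 := by rw [h1]; simpa using hper 0
      have hbz : b z = b 0 := by rw [h1]; exact hb.2.1.symm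
      rw [hR, hT, hA1, hbz]
      linarith
    · -- z < 1
      have hdz0 : 0 ≤ (d:ℝ) * z := mul_nonneg hd0.le hz.1
      set n : ℤ := ⌊(d:ℝ) * z⌋ with hn
      have hn0 : 0 ≤ n := Int.le_floor.mpr (by simpa using hdz0)
      have hnd : n < d := by
        have h2 : (d:ℝ) * z < d := by nlinarith
        exact_mod_cast Int.floor_lt.mpr (by exact_mod_cast h2)
      have hid : n.toNat < d := by omega
      have htz : tau d n.toNat (Tmap d z) = z := by
        have hcast : ((n.toNat : ℕ) : ℝ) = ((n : ℤ) : ℝ) := by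
          exact_mod_cast Int.toNat_of_nonneg hn0
        rw [tau, Tmap, Int.fract, hcast, hn]
        field_simp
        ring
      have hTmem : Tmap d z ∈ Icc (0:ℝ) 1 :=
        ⟨Int.fract_nonneg _, (Int.fract_lt_one _).le⟩
      have hcal := calib_ge hb hTmem hid
      rw [htz] at hcal
      rw [hR]
      linarith
  -- p ≥ 0
  obtain ⟨M, hM⟩ := isCompact_Icc.exists_bound_of_continuousOn hb.1
  have hpge : ∀ x ∈ Icc (0:ℝ) 1, ∀ w : ℕ → ℕ, (∀ k, w k < d) → 0 ≤ p x w := by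
    intro x hx w hw
    rw [hp, sub_nonneg]
    have hstep : ∀ n : ℕ,
        (∑ k ∈ Finset.range (n+1), lam ^ k * A (tpath d w x k))
          + lam ^ (n+1) * b (tpath d w x n) ≤ b x := by
      intro n
      induction n with
      | zero =>
        have hcal0 := calib_ge hb hx (hw 0)
        have h0 : tpath d w x 0 = tau d (w 0) x := rfl
        rw [Finset.sum_range_one, pow_zero, one_mul, pow_one, h0]
        linarith
      | succ m ih =>
        have h2 := calib_ge hb (tpath_mem hd hw hx m) (hw (m+1))
        have h3 : tau d (w (m+1)) (tpath d w x m) = tpath d w x (m+1) := rfl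
        rw [h3] at h2
        have hpow : (0:ℝ) ≤ lam ^ (m+1) := by positivity
        have h4 := mul_le_mul_of_nonneg_left h2 hpow
        have h5 : lam ^ (m+1) * (lam * b (tpath d w x (m+1)) + A (tpath d w x (m+1)))
            = lam ^ (m+2) * b (tpath d w x (m+1))
              + lam ^ (m+1) * A (tpath d w x (m+1)) := by ring
        rw [h5] at h4
        rw [Finset.sum_range_succ]
        have hexp : lam ^ (m + 1 + 1) = lam ^ (m + 2) := by norm_num
        rw [hexp]
        linarith
    have hsum := summable_aux hlam0 hlam1 hd hA hw hx
    have htend1 : Filter.Tendsto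
        (fun n => ∑ k ∈ Finset.range (n+1), lam ^ k * A (tpath d w x k))
        Filter.atTop (nhds (Sfun lam d A x w)) :=
      (hsum.hasSum.tendsto_sum_nat).comp (Filter.tendsto_add_atTop_nat 1)
    have htend2 : Filter.Tendsto (fun n : ℕ => lam ^ (n+1) * b (tpath d w x n))
        Filter.atTop (nhds 0) := by
      have hbd : ∀ n : ℕ, ‖lam ^ (n+1) * b (tpath d w x n)‖ ≤ M * lam ^ (n+1) := by
        intro n
        rw [norm_mul, Real.norm_eq_abs, Real.norm_eq_abs, abs_pow, abs_of_pos hlam0, mul_comm]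
        exact mul_le_mul_of_nonneg_right (hM _ (tpath_mem hd hw hx n))
          (pow_nonneg hlam0.le _)
      have h6 : Filter.Tendsto (fun n : ℕ => lam ^ (n+1)) Filter.atTop (nhds 0) :=
        (tendsto_pow_atTop_nhds_zero_of_lt_one hlam0.le hlam1).comp
          (Filter.tendsto_add_atTop_nat 1)
      have h7 : Filter.Tendsto (fun n : ℕ => M * lam ^ (n+1)) Filter.atTop (nhds 0) := by
        simpa using h6.const_mul M
      exact squeeze_zero_norm hbd h7
    have hlim := le_of_tendsto (htend1.add htend2) (Filter.Eventually.of_forall hstep)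
    simpa using hlim
  -- key relation (a)
  have hkey : ∀ x ∈ Icc (0:ℝ) 1, ∀ w : ℕ → ℕ, (∀ k, w k < d) →
      R (tau d (w 0) x) = p x w - lam * p (tau d (w 0) x) (shift w) := by
    intro x hx w hw
    rw [hR, hp, hp, Sfun_rec hlam0 hlam1 hd hA hw hx, b_Tmap_tau hd hb (w 0) hx]
    ring
  -- invariance (b)
  have hinv : ∀ x ∈ Icc (0:ℝ) 1, ∀ w : ℕ → ℕ, (∀ k, w k < d) →
      p x w = 0 → p (tau d (w 0) x) (shift w) = 0 := by
    intro x hx w hw hpz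
    have hk := hkey x hx w hw
    have h1 := hRge (tau d (w 0) x) (tau_mem hd (hw 0) hx)
    have h2 := hpge (tau d (w 0) x) (tau_mem hd (hw 0) hx) (shift w) (fun k => hw (k+1))
    rw [hk, hpz] at h1
    have h3 : p (tau d (w 0) x) (shift w) ≤ 0 := by nlinarith
    linarith
  refine ⟨hRge, hpge, hkey, hinv, ?_⟩
  -- (c)
  intro x hx a ha hopt
  have key : ∀ n : ℕ, p (tpath d a x n) (fun m => a (m + n + 1)) = 0 := by
    intro n
    induction n with
    | zero =>
      have h0 := hinv x hx a ha (by rw [hp, hopt]; ring)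
      have e0 : (fun m => a (m + 0 + 1)) = shift a := by
        funext m; simp [shift]
      rw [e0]
      exact h0
    | succ m ih =>
      have h := hinv (tpath d a x m) (tpath_mem hd ha hx m)
        (fun k => a (k + m + 1)) (fun k => ha _) ih
      convert h using 2
      · show tau d (a (m+1)) (tpath d a x m) = _
        norm_num
      · funext k
        show a (k + (m+1) + 1) = a (k + 1 + m + 1)
        congr 1
        omega
  intro n
  have := key n
  rw [hp] at this
  linarith


end
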